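/- Let D be a strong generalized sum of two vertex-disjoint digraphs D₁, D₂ with Hamiltonian cycles C₁ of length n and C₂ of length m. If D contains no good pair of arcs between C₁ and C₂, then for each vertex v of D and each integer t with 3 ≤ t ≤ 2·min(n,m), D contains a directed cycle of length t passing through v. -/

import Mathlib

/-- A directed cycle of length `k` passing through `v` in the digraph with arc relation `A`. -/
def CycleThru {V : Type*} (A : V → V → Prop) (k : ℕ) (v : V) : Prop :=
  ∃ z : ZMod k → V, Function.Injective z ∧ (∀ i, A (z i) (z (i + 1))) ∧ ∃ i, z i = v

lemma cycleThru_of_fn {V : Type*} (A : V → V → Prop) (t : ℕ) (ht : 2 ≤ t) (g : ℕ → V)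
    (hinj : ∀ i j, i < t → j < t → g i = g j → i = j)
    (harc : ∀ i, i + 1 < t → A (g i) (g (i + 1)))
    (hlast : A (g (t - 1)) (g 0)) : CycleThru A t (g 0) := by
  haveI : NeZero t := ⟨by omega⟩
  haveI : Fact (1 < t) := ⟨by omega⟩
  refine ⟨fun i => g i.val, ?_, ?_, 0, by show g (ZMod.val 0) = g 0; rw [ZMod.val_zero]⟩
  · intro i j h
    exact ZMod.val_injective t (hinj _ _ (ZMod.val_lt i) (ZMod.val_lt j) h)
  · intro i
    show A (g i.val) (g (i + 1).val)
    have h1 : (i + 1).val = (i.val + 1) % t := by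
      rw [ZMod.val_add, ZMod.val_one]
    rcases lt_or_ge (i.val + 1) t with h | h
    · rw [h1, Nat.mod_eq_of_lt h]; exact harc _ h
    · have hi := ZMod.val_lt i
      have hit : i.val = t - 1 := by omega
      have h2 : (i.val + 1) % t = 0 := by
        rw [hit, Nat.sub_add_cancel (by omega), Nat.mod_self]
      rw [h1, h2, hit]
      exact hlast

lemma find_flip (g : ℕ → Prop) (K : ℕ) (h0 : g 0) (hK : ¬ g K) :
    ∃ k, g k ∧ ¬ g (k + 1) := by
  by_contra h
  push_neg at h
  have : ∀ k, g k := by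
    intro k; induction k with
    | zero => exact h0
    | succ k ih => exact h k ih
  exact hK (this K)

lemma crt_lift {n m : ℕ} (a b : ℕ) (hab : (a : ZMod (n.gcd m)) = (b : ZMod (n.gcd m))) :
    ∃ j : ℕ, (j : ZMod n) = (a : ZMod n) ∧ (j : ZMod m) = (b : ZMod m) := by
  have h := (ZMod.natCast_eq_natCast_iff _ _ _).mp hab
  obtain ⟨k, hk1, hk2⟩ := Nat.chineseRemainder' h
  exact ⟨k, (ZMod.natCast_eq_natCast_iff _ _ _).mpr hk1, (ZMod.natCast_eq_natCast_iff _ _ _).mpr hk2⟩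

lemma exists_int_in_interval {d m : ℕ} (hd : d ∣ m) (hm : 0 < m) (τ : ZMod d) (L : ℤ)
    (hτ : τ ≠ ((L - 1 : ℤ) : ZMod d)) :
    ∃ z : ℤ, L ≤ z ∧ z ≤ L + m - 2 ∧ ((z : ZMod d) = τ) := by
  have hd0 : 0 < d := Nat.pos_of_dvd_of_pos hd hm
  haveI : NeZero d := ⟨by omega⟩
  set v := (τ - (L : ZMod d)).val with hv
  have hvlt : v < d := ZMod.val_lt _
  have hcast : ((v : ℤ) : ZMod d) = τ - (L : ZMod d) := by
    push_cast
    rw [ZMod.natCast_val, ZMod.cast_id]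
  refine ⟨L + v, by omega, ?_, by rw [Int.cast_add, hcast]; ring⟩
  rcases eq_or_lt_of_le (Nat.le_of_dvd hm hd) with hdm | hdm
  · -- d = m : need v ≠ d - 1
    have hvne : v ≠ d - 1 := by
      intro hveq
      apply hτ
      have h1 : τ - (L : ZMod d) = ((d - 1 : ℕ) : ZMod d) := by
        rw [← hveq, ZMod.natCast_val, ZMod.cast_id]
      have h2 : ((d - 1 : ℕ) : ZMod d) = -1 := by
        have h3 : ((d : ℕ) : ZMod d) = 0 := ZMod.natCast_self d
        push_cast [Nat.cast_sub (by omega : 1 ≤ d)]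
        rw [h3]; ring
      rw [h2] at h1
      push_cast
      linear_combination h1
    omega
  · omega

section Struct
variable {V : Type*} {A : V → V → Prop} {n m : ℕ} [NeZero n] [NeZero m]
  {x : ZMod n → V} {y : ZMod m → V}

lemma arc_step (hone : ∀ s t, Xor' (A (x s) (y t)) (A (y t) (x s)))
    (hngp : ¬ ∃ (s : ZMod n) (r : ZMod m), A (x s) (y r) ∧ A (y (r - 1)) (x (s + 1)))
    {s : ZMod n} {r : ZMod m} (h : A (x s) (y r)) : A (x (s + 1)) (y (r - 1)) := by
  rcases hone (s + 1) (r - 1) with ⟨h1, _⟩ | ⟨h1, _⟩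
  · exact h1
  · exact absurd ⟨s, r, h, h1⟩ hngp

lemma arc_iter (hone : ∀ s t, Xor' (A (x s) (y t)) (A (y t) (x s)))
    (hngp : ¬ ∃ (s : ZMod n) (r : ZMod m), A (x s) (y r) ∧ A (y (r - 1)) (x (s + 1)))
    (j : ℕ) {s : ZMod n} {r : ZMod m} (h : A (x s) (y r)) :
    A (x (s + j)) (y (r - j)) := by
  induction j with
  | zero => simpa using h
  | succ j ih =>
      have := arc_step hone hngp ih
      have e1 : s + ↑j + 1 = s + ↑(j + 1) := by push_cast; ring
      have e2 : r - ↑j - 1 = r - ↑(j + 1) := by push_cast; ring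
      rwa [e1, e2] at this

lemma arc_transport (hone : ∀ s t, Xor' (A (x s) (y t)) (A (y t) (x s)))
    (hngp : ¬ ∃ (s : ZMod n) (r : ZMod m), A (x s) (y r) ∧ A (y (r - 1)) (x (s + 1)))
    (hn : 2 ≤ n) (hm : 2 ≤ m)
    (j : ℕ) (s s' : ZMod n) (r r' : ZMod m)
    (h1 : (j : ZMod n) = s' - s) (h2 : (j : ZMod m) = r - r') :
    A (x s) (y r) ↔ A (x s') (y r') := by
  constructor
  · intro h
    have := arc_iter hone hngp j h
    rw [h1, h2] at this
    simpa using this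
  · intro h
    have h4 : 4 ≤ n * m := Nat.mul_le_mul hn hm
    set j' := n * m * (j + 1) - j with hj'def
    have hj' : j' + j = n * m * (j + 1) := by
      have : j < n * m * (j + 1) := by nlinarith
      omega
    have hc : ((n * m * (j + 1) : ℕ) : ZMod n) = 0 := by
      push_cast
      rw [ZMod.natCast_self]; ring
    have hc' : ((n * m * (j + 1) : ℕ) : ZMod m) = 0 := by
      push_cast
      rw [ZMod.natCast_self]; ring
    have hn1 : (j' : ZMod n) = s - s' := by
      have : ((j' + j : ℕ) : ZMod n) = 0 := by rw [hj', hc]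
      push_cast at this
      rw [h1] at this
      linear_combination this
    have hm1 : (j' : ZMod m) = r' - r := by
      have : ((j' + j : ℕ) : ZMod m) = 0 := by rw [hj', hc']
      push_cast at this
      rw [h2] at this
      linear_combination this
    have := arc_iter hone hngp j' h
    rw [hn1, hm1] at this
    simpa using this

lemma exists_xy_arc (hdisj : ∀ s t, x s ≠ y t)
    (hcov : ∀ v : V, (∃ s, x s = v) ∨ (∃ t, y t = v))
    (hstrong : ∀ u v : V, u ≠ v → Relation.ReflTransGen A u v) :
    ∃ s r, A (x s) (y r) := by
  have h := hstrong (x 0) (y 0) (hdisj 0 0)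
  refine Relation.ReflTransGen.head_induction_on
    (motive := fun u _ => (∃ s, u = x s) → ∃ s r, A (x s) (y r)) h ?_ ?_ ⟨0, rfl⟩
  · rintro ⟨s, hs⟩
    exact absurd hs.symm (hdisj s 0)
  · rintro u c h' _ ih ⟨s, hu⟩
    rcases hcov c with ⟨s', hs'⟩ | ⟨r', hr'⟩
    · exact ih ⟨s', hs'.symm⟩
    · exact ⟨s, r', by rw [hu, ← hr'] at h' ; exact h'⟩

lemma exists_yx_arc (hdisj : ∀ s t, x s ≠ y t)
    (hcov : ∀ v : V, (∃ s, x s = v) ∨ (∃ t, y t = v))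
    (hstrong : ∀ u v : V, u ≠ v → Relation.ReflTransGen A u v) :
    ∃ s r, A (y r) (x s) := by
  have h := hstrong (y 0) (x 0) (Ne.symm (hdisj 0 0))
  refine Relation.ReflTransGen.head_induction_on
    (motive := fun u _ => (∃ r, u = y r) → ∃ s r, A (y r) (x s)) h ?_ ?_ ⟨0, rfl⟩
  · rintro ⟨r, hr⟩
    exact absurd hr (hdisj 0 r)
  · rintro u c h' _ ih ⟨r, hu⟩
    rcases hcov c with ⟨s', hs'⟩ | ⟨r', hr'⟩
    · exact ⟨s', r, by rw [hu, ← hs'] at h'; exact h'⟩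
    · exact ih ⟨r', hr'.symm⟩

end Struct

section Struct2
variable {V : Type*} {A : V → V → Prop} {n m : ℕ}
  {x : ZMod n → V} {y : ZMod m → V}

lemma natCast_val_eq (hn : 2 ≤ n) (u : ZMod n) : ((u.val : ℕ) : ZMod n) = u := by
  haveI : NeZero n := ⟨by omega⟩
  rw [ZMod.natCast_val, ZMod.cast_id]

/-- Existence of a descent and an ascent in the same row. -/
lemma exists_descent_ascent
    (hn : 2 ≤ n) (hm : 2 ≤ m)
    (hdisj : ∀ s t, x s ≠ y t)
    (hcov : ∀ v : V, (∃ s, x s = v) ∨ (∃ t, y t = v))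
    (hone : ∀ s t, Xor' (A (x s) (y t)) (A (y t) (x s)))
    (hstrong : ∀ u v : V, u ≠ v → Relation.ReflTransGen A u v)
    (hngp : ¬ ∃ (s : ZMod n) (r : ZMod m), A (x s) (y r) ∧ A (y (r - 1)) (x (s + 1))) :
    ∃ (sc sa : ZMod n) (rc ra : ZMod m),
      A (x sc) (y rc) ∧ ¬ A (x sc) (y (rc + 1)) ∧
      ¬ A (x sa) (y ra) ∧ A (x sa) (y (ra + 1)) := by
  haveI : NeZero n := ⟨by omega⟩
  haveI : NeZero m := ⟨by omega⟩
  obtain ⟨s1, r1, hP⟩ := exists_xy_arc (A := A) hdisj hcov hstrong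
  obtain ⟨s2, r2, hN'⟩ := exists_yx_arc (A := A) hdisj hcov hstrong
  have hN : ¬ A (x s2) (y r2) := by
    rcases hone s2 r2 with ⟨_, h2⟩ | ⟨_, h2⟩
    · exact absurd hN' h2
    · exact h2
  -- transport hN to row s1
  set j := (s2 - s1).val with hj
  set r'' := r2 + (j : ZMod m) with hr''
  have hN1 : ¬ A (x s1) (y r'') := by
    intro hcon
    exact hN ((arc_transport hone hngp hn hm j s1 s2 r'' r2
      (natCast_val_eq hn _) (by ring)).mp hcon)
  -- descent
  have hstart : A (x s1) (y (r1 + ((0 : ℕ) : ZMod m))) := by simpa using hP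
  have hKend : ¬ A (x s1) (y (r1 + (((r'' - r1).val : ℕ) : ZMod m))) := by
    rw [natCast_val_eq hm]
    have : r1 + (r'' - r1) = r'' := by ring
    rw [this]; exact hN1
  obtain ⟨k, hk1, hk2⟩ := find_flip (fun k => A (x s1) (y (r1 + (k : ZMod m)))) _ hstart hKend
  -- ascent
  have hstart' : ¬ A (x s1) (y (r'' + ((0 : ℕ) : ZMod m))) := by simpa using hN1
  have hKend' : ¬ ¬ A (x s1) (y (r'' + (((r1 - r'').val : ℕ) : ZMod m))) := by
    rw [natCast_val_eq hm]
    have : r'' + (r1 - r'') = r1 := by ring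
    rw [this]
    exact not_not_intro hP
  obtain ⟨k', hk1', hk2'⟩ := find_flip (fun k => ¬ A (x s1) (y (r'' + (k : ZMod m)))) _ hstart' hKend'
  rw [not_not] at hk2'
  refine ⟨s1, s1, r1 + (k : ZMod m), r'' + (k' : ZMod m), hk1, ?_, hk1', ?_⟩
  · intro hcon
    apply hk2
    have : r1 + ((k + 1 : ℕ) : ZMod m) = r1 + (k : ZMod m) + 1 := by push_cast; ring
    rw [this]; exact hcon
  · have : r'' + ((k' + 1 : ℕ) : ZMod m) = r'' + (k' : ZMod m) + 1 := by push_cast; ring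
    rw [← this]; exact hk2'

/-- The descent and ascent lie on different diagonals mod gcd. -/
lemma diag_ne
    (hn : 2 ≤ n) (hm : 2 ≤ m)
    (hone : ∀ s t, Xor' (A (x s) (y t)) (A (y t) (x s)))
    (hngp : ¬ ∃ (s : ZMod n) (r : ZMod m), A (x s) (y r) ∧ A (y (r - 1)) (x (s + 1)))
    {sc sa : ZMod n} {rc ra : ZMod m}
    (hc : A (x sc) (y rc)) (ha : ¬ A (x sa) (y ra)) :
    (ZMod.castHom (Nat.gcd_dvd_left n m) (ZMod (n.gcd m)) sc
      + ZMod.castHom (Nat.gcd_dvd_right n m) (ZMod (n.gcd m)) rc)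
    ≠ (ZMod.castHom (Nat.gcd_dvd_left n m) (ZMod (n.gcd m)) sa
      + ZMod.castHom (Nat.gcd_dvd_right n m) (ZMod (n.gcd m)) ra) := by
  haveI : NeZero n := ⟨by omega⟩
  haveI : NeZero m := ⟨by omega⟩
  intro heq
  set d := n.gcd m with hd
  set νn := ZMod.castHom (Nat.gcd_dvd_left n m) (ZMod d) with hνn
  set νm := ZMod.castHom (Nat.gcd_dvd_right n m) (ZMod d) with hνm
  have hvn : ∀ u : ZMod n, ((u.val : ℕ) : ZMod d) = νn u := by
    intro u; rw [ZMod.natCast_val, hνn, ZMod.castHom_apply]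
  have hvm : ∀ u : ZMod m, ((u.val : ℕ) : ZMod d) = νm u := by
    intro u; rw [ZMod.natCast_val, hνm, ZMod.castHom_apply]
  have hab : (((sa - sc).val : ℕ) : ZMod d) = (((rc - ra).val : ℕ) : ZMod d) := by
    rw [hvn, hvm, map_sub, map_sub]
    linear_combination -heq
  obtain ⟨j, hj1, hj2⟩ := crt_lift (n := n) (m := m) _ _ hab
  rw [natCast_val_eq hn] at hj1
  rw [natCast_val_eq hm] at hj2
  exact ha ((arc_transport hone hngp hn hm j sc sa rc ra hj1 hj2).mp hc)

end Struct2

lemma cast_nat_inj {n : ℕ} [NeZero n] {u v : ℕ} (hu : u < n) (hv : v < n)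
    (h : (u : ZMod n) = v) : u = v := by
  rw [← ZMod.val_cast_of_lt hu, ← ZMod.val_cast_of_lt hv, h]

section Key
variable {V : Type*} {A : V → V → Prop} {n m : ℕ}
  {x : ZMod n → V} {y : ZMod m → V}

lemma key_odd
    (hn : 2 ≤ n) (hm : 2 ≤ m)
    (hxinj : Function.Injective x) (hyinj : Function.Injective y)
    (hxcyc : ∀ i, A (x i) (x (i + 1))) (hycyc : ∀ i, A (y i) (y (i + 1)))
    (hdisj : ∀ s t, x s ≠ y t)
    (hone : ∀ s t, Xor' (A (x s) (y t)) (A (y t) (x s)))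
    {sc : ZMod n} {rc : ZMod m}
    (hdes1 : A (x sc) (y rc)) (hdes2 : ¬ A (x sc) (y (rc + 1)))
    (hngp : ¬ ∃ (s : ZMod n) (r : ZMod m), A (x s) (y r) ∧ A (y (r - 1)) (x (s + 1)))
    (s₀ : ZMod n) (t ha : ℕ) (hodd : t = 2 * ha + 1) (h1a : 1 ≤ ha)
    (hbn : ha + 1 ≤ n) (hbm : ha + 1 ≤ m) :
    CycleThru A t (x s₀) := by
  haveI : NeZero n := ⟨by omega⟩
  haveI : NeZero m := ⟨by omega⟩
  set j₁ := (s₀ + ((ha - 1 : ℕ) : ZMod n) - sc).val with hj₁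
  set β := rc - (j₁ : ZMod m) with hβ
  have hj₁n : (j₁ : ZMod n) = s₀ + ((ha - 1 : ℕ) : ZMod n) - sc := natCast_val_eq hn _
  set g : ℕ → V := fun i =>
    if i < ha then x (s₀ + (i : ZMod n)) else y (β + ((i - ha : ℕ) : ZMod m)) with hg
  have hg0 : g 0 = x s₀ := by
    simp only [hg]
    rw [if_pos (by omega)]
    norm_num
  -- arc 1 : x (s₀ + (ha-1)) → y β
  have harc1 : A (x (s₀ + ((ha - 1 : ℕ) : ZMod n))) (y β) := by
    have := arc_iter hone hngp j₁ hdes1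
    rw [hj₁n] at this
    have e : sc + (s₀ + ((ha - 1 : ℕ) : ZMod n) - sc) = s₀ + ((ha - 1 : ℕ) : ZMod n) := by ring
    rw [e] at this
    exact this
  -- arc 2 : y (β + ha) → x s₀
  have harc2 : A (y (β + (ha : ZMod m))) (x s₀) := by
    have h4 : 4 ≤ n * m := Nat.mul_le_mul hn hm
    set N := n * m * (j₁ + 1) with hN
    have hjN : j₁ < N := by
      have : j₁ + 1 ≤ n * m * (j₁ + 1) := Nat.le_mul_of_pos_left _ (by omega)
      omega
    set j₂ := N + (ha - 1) - j₁ with hj₂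
    have hsum : j₂ + j₁ = N + (ha - 1) := by omega
    have hNn : ((N : ℕ) : ZMod n) = 0 := by rw [hN]; push_cast; rw [ZMod.natCast_self]; ring
    have hNm : ((N : ℕ) : ZMod m) = 0 := by rw [hN]; push_cast; rw [ZMod.natCast_self]; ring
    have hj₂n : (j₂ : ZMod n) = sc - s₀ := by
      have hc : ((j₂ + j₁ : ℕ) : ZMod n) = ((N + (ha - 1) : ℕ) : ZMod n) := by rw [hsum]
      push_cast at hc
      rw [hNn, hj₁n] at hc
      linear_combination hc
    have hj₂m : (j₂ : ZMod m) = (β + (ha : ZMod m)) - (rc + 1) := by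
      have hc : ((j₂ + j₁ : ℕ) : ZMod m) = ((N + (ha - 1) : ℕ) : ZMod m) := by rw [hsum]
      push_cast at hc
      rw [hNm] at hc
      have e1 : ((ha - 1 : ℕ) : ZMod m) = (ha : ZMod m) - 1 := by
        push_cast [Nat.cast_sub h1a]; ring
      rw [e1] at hc
      rw [hβ]
      linear_combination hc
    have hno : ¬ A (x s₀) (y (β + (ha : ZMod m))) := by
      intro hcon
      exact hdes2 ((arc_transport hone hngp hn hm j₂ s₀ sc _ (rc + 1) hj₂n hj₂m).mp hcon)
    rcases hone s₀ (β + (ha : ZMod m)) with ⟨hA, _⟩ | ⟨hB, _⟩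
    · exact absurd hA hno
    · exact hB
  rw [← hg0]
  apply cycleThru_of_fn A t (by omega) g
  · -- injectivity
    intro i j hi hj hgij
    simp only [hg] at hgij
    by_cases h1 : i < ha <;> by_cases h2 : j < ha
    · rw [if_pos h1, if_pos h2] at hgij
      have := hxinj hgij
      have : (i : ZMod n) = (j : ZMod n) := by linear_combination this
      exact cast_nat_inj (by omega) (by omega) this
    · rw [if_pos h1, if_neg h2] at hgij
      exact absurd hgij (hdisj _ _)
    · rw [if_neg h1, if_pos h2] at hgij
      exact absurd hgij.symm (hdisj _ _)
    · rw [if_neg h1, if_neg h2] at hgij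
      have := hyinj hgij
      have : ((i - ha : ℕ) : ZMod m) = ((j - ha : ℕ) : ZMod m) := by linear_combination this
      have := cast_nat_inj (by omega) (by omega) this
      omega
  · -- arcs
    intro i hi1
    simp only [hg]
    by_cases h1 : i + 1 < ha
    · rw [if_pos (by omega), if_pos h1]
      have := hxcyc (s₀ + (i : ZMod n))
      have e : s₀ + (i : ZMod n) + 1 = s₀ + ((i + 1 : ℕ) : ZMod n) := by push_cast; ring
      rwa [e] at this
    · by_cases h2 : i < ha
      · -- i + 1 = ha
        have hieq : i = ha - 1 := by omega
        rw [if_pos h2, if_neg (by omega)]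
        have e1 : (i : ZMod n) = ((ha - 1 : ℕ) : ZMod n) := by rw [hieq]
        have e2 : ((i + 1 - ha : ℕ) : ZMod m) = 0 := by
          have : i + 1 - ha = 0 := by omega
          rw [this]; norm_num
        rw [e1, e2]
        simpa using harc1
      · -- both y
        rw [if_neg h2, if_neg (by omega)]
        have := hycyc (β + ((i - ha : ℕ) : ZMod m))
        have e : β + ((i - ha : ℕ) : ZMod m) + 1 = β + ((i + 1 - ha : ℕ) : ZMod m) := by
          have : i + 1 - ha = (i - ha) + 1 := by omega
          rw [this]; push_cast; ring
        rwa [e] at this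
  · -- last arc
    have e1 : g (t - 1) = y (β + (ha : ZMod m)) := by
      simp only [hg]
      rw [if_neg (by omega)]
      have : t - 1 - ha = ha := by omega
      rw [this]
    rw [e1, hg0]
    exact harc2

end Key

section KeyEven
variable {V : Type*} {A : V → V → Prop} {n m : ℕ}
  {x : ZMod n → V} {y : ZMod m → V}

lemma key_even
    (hn : 2 ≤ n) (hm : 2 ≤ m)
    (hxinj : Function.Injective x) (hyinj : Function.Injective y)
    (hxcyc : ∀ i, A (x i) (x (i + 1))) (hycyc : ∀ i, A (y i) (y (i + 1)))
    (hdisj : ∀ s t, x s ≠ y t)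
    (hone : ∀ s t, Xor' (A (x s) (y t)) (A (y t) (x s)))
    {sc sa : ZMod n} {rc ra : ZMod m}
    (hdes1 : A (x sc) (y rc)) (hdes2 : ¬ A (x sc) (y (rc + 1)))
    (hasc1 : ¬ A (x sa) (y ra)) (hasc2 : A (x sa) (y (ra + 1)))
    (hngp : ¬ ∃ (s : ZMod n) (r : ZMod m), A (x s) (y r) ∧ A (y (r - 1)) (x (s + 1)))
    (s₀ : ZMod n) (t h : ℕ) (heven : t = 2 * h) (h2h : 2 ≤ h)
    (hbn : h ≤ n) (hbm : h ≤ m) :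
    CycleThru A t (x s₀) := by
  haveI : NeZero n := ⟨by omega⟩
  haveI : NeZero m := ⟨by omega⟩
  set d := n.gcd m with hd
  haveI : NeZero d := ⟨by
    have : 0 < n.gcd m := Nat.gcd_pos_of_pos_left m (by omega)
    omega⟩
  set νn := ZMod.castHom (Nat.gcd_dvd_left n m) (ZMod d) with hνn
  set νm := ZMod.castHom (Nat.gcd_dvd_right n m) (ZMod d) with hνm
  have hvn : ∀ u : ZMod n, ((u.val : ℕ) : ZMod d) = νn u := by
    intro u; rw [ZMod.natCast_val, hνn, ZMod.castHom_apply]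
  have hvm : ∀ u : ZMod m, ((u.val : ℕ) : ZMod d) = νm u := by
    intro u; rw [ZMod.natCast_val, hνm, ZMod.castHom_apply]
  have hEne := diag_ne hn hm hone hngp hdes1 hasc1
  rw [← hνn, ← hνm] at hEne
  -- choose z in the right interval and residue class
  obtain ⟨z, hz1, hz2, hz3⟩ := exists_int_in_interval (Nat.gcd_dvd_right n m) (by omega)
    ((νn sc + νm rc - νn sa - νm ra) + ((h : ℕ) : ZMod d) - 1) (h : ℤ)
    (by
      intro hcon
      apply hEne
      have : ((((h : ℤ) - 1) : ℤ) : ZMod d) = ((h : ℕ) : ZMod d) - 1 := by push_cast; ring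
      rw [this] at hcon
      linear_combination hcon)
  -- split z as a1 + w
  obtain ⟨a1, w, ha11, ha1h, hw1, hw2, hzsum⟩ :
      ∃ a1 w : ℕ, 1 ≤ a1 ∧ a1 + 1 ≤ h ∧ h - 1 ≤ w ∧ w ≤ m - 1 ∧ (a1 : ℤ) + (w : ℤ) = z := by
    rcases le_or_gt z m with hzm | hzm
    · exact ⟨1, (z - 1).toNat, le_refl _, by omega, by omega, by omega, by omega⟩
    · exact ⟨(z - m + 1).toNat, m - 1, by omega, by omega, by omega, by omega, by omega⟩
  have hzc : (a1 : ZMod d) + (w : ZMod d) = (νn sc + νm rc - νn sa - νm ra) + ((h : ℕ) : ZMod d) - 1 := by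
    have e : (((a1 : ℤ) + (w : ℤ) : ℤ) : ZMod d) = ((z : ℤ) : ZMod d) := by rw [hzsum]
    push_cast at e
    rw [hz3] at e
    push_cast
    exact e
  -- definitions
  set j₁ := (s₀ + ((a1 - 1 : ℕ) : ZMod n) - sc).val with hj₁
  have hj₁n : (j₁ : ZMod n) = s₀ + ((a1 - 1 : ℕ) : ZMod n) - sc := natCast_val_eq hn _
  set β := rc - (j₁ : ZMod m) with hβ
  set δ := β - (w : ZMod m) with hδdef
  -- CRT for j₃
  have ha1c : ((a1 - 1 : ℕ) : ZMod d) = (a1 : ZMod d) - 1 := by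
    push_cast [Nat.cast_sub ha11]; ring
  have hh1c : ((h - 1 : ℕ) : ZMod d) = ((h : ℕ) : ZMod d) - 1 := by
    push_cast [Nat.cast_sub (by omega : 1 ≤ h)]; ring
  have hab : (((s₀ + ((h - 1 : ℕ) : ZMod n) - sa).val : ℕ) : ZMod d)
      = (((ra + 1 - rc + (j₁ : ZMod m) + (w : ZMod m)).val : ℕ) : ZMod d) := by
    rw [hvn, hvm]
    rw [map_sub, map_add, map_natCast]
    rw [map_add, map_add, map_sub, map_add, map_one, map_natCast, map_natCast]
    have hj₁d : ((j₁ : ℕ) : ZMod d) = νn s₀ + ((a1 : ZMod d) - 1) - νn sc := by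
      rw [hvn, map_sub, map_add, map_natCast, ha1c]
    rw [hh1c, hj₁d]
    linear_combination - hzc
  obtain ⟨j₃, hj₃n', hj₃m'⟩ := crt_lift (n := n) (m := m) _ _ hab
  rw [natCast_val_eq hn] at hj₃n'
  rw [natCast_val_eq hm] at hj₃m'
  have hδ : ra + 1 - (j₃ : ZMod m) = δ := by
    rw [hj₃m', hδdef, hβ]; ring
  -- arc 1 : x (s₀ + (a1-1)) → y β
  have harc1 : A (x (s₀ + ((a1 - 1 : ℕ) : ZMod n))) (y β) := by
    have := arc_iter hone hngp j₁ hdes1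
    rw [hj₁n] at this
    have e : sc + (s₀ + ((a1 - 1 : ℕ) : ZMod n) - sc) = s₀ + ((a1 - 1 : ℕ) : ZMod n) := by ring
    rw [e] at this
    exact this
  -- arc 2 : y β → x (s₀ + a1)
  have harc2 : A (y β) (x (s₀ + (a1 : ZMod n))) := by
    have h4 : 4 ≤ n * m := Nat.mul_le_mul hn hm
    set N := n * m * (j₁ + 1) with hN
    have hjN : j₁ + 1 ≤ N := Nat.le_mul_of_pos_left _ (by omega)
    set j₂ := N - (j₁ + 1) with hj₂
    have hsum : j₂ + (j₁ + 1) = N := by omega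
    have hNn : ((N : ℕ) : ZMod n) = 0 := by rw [hN]; push_cast; rw [ZMod.natCast_self]; ring
    have hNm : ((N : ℕ) : ZMod m) = 0 := by rw [hN]; push_cast; rw [ZMod.natCast_self]; ring
    have ha1n : ((a1 - 1 : ℕ) : ZMod n) = (a1 : ZMod n) - 1 := by
      push_cast [Nat.cast_sub ha11]; ring
    have hj₂n : (j₂ : ZMod n) = sc - (s₀ + (a1 : ZMod n)) := by
      have hc : ((j₂ + (j₁ + 1) : ℕ) : ZMod n) = ((N : ℕ) : ZMod n) := by rw [hsum]
      push_cast at hc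
      rw [hNn, hj₁n, ha1n] at hc
      linear_combination hc
    have hj₂m : (j₂ : ZMod m) = β - (rc + 1) := by
      have hc : ((j₂ + (j₁ + 1) : ℕ) : ZMod m) = ((N : ℕ) : ZMod m) := by rw [hsum]
      push_cast at hc
      rw [hNm] at hc
      rw [hβ]
      linear_combination hc
    have hno : ¬ A (x (s₀ + (a1 : ZMod n))) (y β) := by
      intro hcon
      exact hdes2 ((arc_transport hone hngp hn hm j₂ _ sc _ (rc + 1) hj₂n hj₂m).mp hcon)
    rcases hone (s₀ + (a1 : ZMod n)) β with ⟨hA, _⟩ | ⟨hB, _⟩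
    · exact absurd hA hno
    · exact hB
  -- arc 3 : x (s₀ + (h-1)) → y δ
  have harc3 : A (x (s₀ + ((h - 1 : ℕ) : ZMod n))) (y δ) := by
    have h3 := arc_iter hone hngp j₃ hasc2
    rw [hj₃n', hδ] at h3
    have e : sa + (s₀ + ((h - 1 : ℕ) : ZMod n) - sa) = s₀ + ((h - 1 : ℕ) : ZMod n) := by ring
    rwa [e] at h3
  -- arc 4 : y (δ + (h-2)) → x s₀
  have harc4 : A (y (δ + ((h - 2 : ℕ) : ZMod m))) (x s₀) := by
    have h4 : 4 ≤ n * m := Nat.mul_le_mul hn hm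
    set N := n * m * (j₃ + 1) with hN
    have hjN : j₃ + 1 ≤ N := Nat.le_mul_of_pos_left _ (by omega)
    set j₄ := N + (h - 1) - j₃ with hj₄
    have hsum : j₄ + j₃ = N + (h - 1) := by omega
    have hNn : ((N : ℕ) : ZMod n) = 0 := by rw [hN]; push_cast; rw [ZMod.natCast_self]; ring
    have hNm : ((N : ℕ) : ZMod m) = 0 := by rw [hN]; push_cast; rw [ZMod.natCast_self]; ring
    have hh1n : ((h - 1 : ℕ) : ZMod n) = ((h : ℕ) : ZMod n) - 1 := by
      push_cast [Nat.cast_sub (by omega : 1 ≤ h)]; ring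
    have hh1m : ((h - 1 : ℕ) : ZMod m) = ((h : ℕ) : ZMod m) - 1 := by
      push_cast [Nat.cast_sub (by omega : 1 ≤ h)]; ring
    have hh2m : ((h - 2 : ℕ) : ZMod m) = ((h : ℕ) : ZMod m) - 2 := by
      push_cast [Nat.cast_sub h2h]; ring
    have hj₄n : (j₄ : ZMod n) = sa - s₀ := by
      have hc : ((j₄ + j₃ : ℕ) : ZMod n) = ((N + (h - 1) : ℕ) : ZMod n) := by rw [hsum]
      push_cast at hc
      rw [hNn, hj₃n', hh1n] at hc
      linear_combination hc
    have hj₄m : (j₄ : ZMod m) = (δ + ((h - 2 : ℕ) : ZMod m)) - ra := by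
      have hc : ((j₄ + j₃ : ℕ) : ZMod m) = ((N + (h - 1) : ℕ) : ZMod m) := by rw [hsum]
      push_cast at hc
      rw [hNm, hh1m] at hc
      have hjm : (j₃ : ZMod m) = ra + 1 - δ := by rw [← hδ]; ring
      rw [hjm] at hc
      rw [hh2m]
      linear_combination hc
    have hno : ¬ A (x s₀) (y (δ + ((h - 2 : ℕ) : ZMod m))) := by
      intro hcon
      exact hasc1 ((arc_transport hone hngp hn hm j₄ s₀ sa _ ra hj₄n hj₄m).mp hcon)
    rcases hone s₀ (δ + ((h - 2 : ℕ) : ZMod m)) with ⟨hA, _⟩ | ⟨hB, _⟩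
    · exact absurd hA hno
    · exact hB
  -- the cycle function
  set g : ℕ → V := fun i =>
    if i < a1 then x (s₀ + (i : ZMod n))
    else if i = a1 then y β
    else if i < h + 1 then x (s₀ + ((i - 1 : ℕ) : ZMod n))
    else y (δ + ((i - (h + 1) : ℕ) : ZMod m)) with hg
  have hg0 : g 0 = x s₀ := by
    simp only [hg]
    rw [if_pos (by omega)]
    norm_num
  have hgx1 : ∀ i, i < a1 → g i = x (s₀ + (i : ZMod n)) := by
    intro i hi; simp only [hg]; rw [if_pos hi]
  have hgx2 : ∀ i, a1 < i → i < h + 1 → g i = x (s₀ + ((i - 1 : ℕ) : ZMod n)) := by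
    intro i hi1 hi2; simp only [hg]; rw [if_neg (by omega), if_neg (by omega), if_pos hi2]
  have hgy1 : g a1 = y β := by
    simp only [hg]; rw [if_neg (by omega)]; simp
  have hgy2 : ∀ i, h + 1 ≤ i → g i = y (δ + ((i - (h + 1) : ℕ) : ZMod m)) := by
    intro i hi; simp only [hg]; rw [if_neg (by omega), if_neg (by omega), if_neg (by omega)]
  have hβδ : β = δ + (w : ZMod m) := by rw [hδdef]; ring
  rw [← hg0]
  apply cycleThru_of_fn A t (by omega) g
  · -- injectivity
    intro i j hi hj hgij
    have hcl : ∀ k, k < t → (k < a1 ∨ k = a1 ∨ (a1 < k ∧ k < h + 1) ∨ (h + 1 ≤ k ∧ k < t)) := by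
      intro k hk; omega
    have hxx : ∀ (e f : ℕ), e < h → f < h → x (s₀ + (e : ZMod n)) = x (s₀ + (f : ZMod n)) → e = f := by
      intro e f he hf hxy
      have := hxinj hxy
      have : (e : ZMod n) = (f : ZMod n) := by linear_combination this
      exact cast_nat_inj (by omega) (by omega) this
    have hby2 : ∀ k, h + 1 ≤ k → k < t → y β ≠ y (δ + ((k - (h + 1) : ℕ) : ZMod m)) := by
      intro k hk1 hk2 hcon
      have h5 := hyinj hcon
      rw [hβδ] at h5
      have h6 : ((w : ℕ) : ZMod m) = ((k - (h + 1) : ℕ) : ZMod m) := by linear_combination h5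
      have := cast_nat_inj (by omega) (by omega) h6
      omega
    have hy2y2 : ∀ k l, h + 1 ≤ k → k < t → h + 1 ≤ l → l < t →
        y (δ + ((k - (h + 1) : ℕ) : ZMod m)) = y (δ + ((l - (h + 1) : ℕ) : ZMod m)) → k = l := by
      intro k l hk1 hk2 hl1 hl2 hcon
      have h5 := hyinj hcon
      have h6 : ((k - (h + 1) : ℕ) : ZMod m) = ((l - (h + 1) : ℕ) : ZMod m) := by
        linear_combination h5
      have := cast_nat_inj (by omega) (by omega) h6
      omega
    rcases hcl i hi with c1 | c1 | ⟨c1, c1'⟩ | ⟨c1, c1'⟩ <;>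
      rcases hcl j hj with c2 | c2 | ⟨c2, c2'⟩ | ⟨c2, c2'⟩
    · rw [hgx1 i c1, hgx1 j c2] at hgij
      exact hxx i j (by omega) (by omega) hgij
    · rw [hgx1 i c1, c2, hgy1] at hgij
      exact absurd hgij (hdisj _ _)
    · rw [hgx1 i c1, hgx2 j c2 c2'] at hgij
      have := hxx i (j - 1) (by omega) (by omega) hgij
      omega
    · rw [hgx1 i c1, hgy2 j c2] at hgij
      exact absurd hgij (hdisj _ _)
    · rw [c1, hgy1, hgx1 j c2] at hgij
      exact absurd hgij.symm (hdisj _ _)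
    · omega
    · rw [c1, hgy1, hgx2 j c2 c2'] at hgij
      exact absurd hgij.symm (hdisj _ _)
    · rw [c1, hgy1, hgy2 j c2] at hgij
      exact absurd hgij (hby2 j c2 c2')
    · rw [hgx2 i c1 c1', hgx1 j c2] at hgij
      have := hxx (i - 1) j (by omega) (by omega) hgij
      omega
    · rw [c2, hgy1, hgx2 i c1 c1'] at hgij
      exact absurd hgij (hdisj _ _)
    · rw [hgx2 i c1 c1', hgx2 j c2 c2'] at hgij
      have := hxx (i - 1) (j - 1) (by omega) (by omega) hgij
      omega
    · rw [hgx2 i c1 c1', hgy2 j c2] at hgij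
      exact absurd hgij (hdisj _ _)
    · rw [hgy2 i c1, hgx1 j c2] at hgij
      exact absurd hgij.symm (hdisj _ _)
    · rw [c2, hgy1, hgy2 i c1] at hgij
      exact absurd hgij.symm (hby2 i c1 c1')
    · rw [hgy2 i c1, hgx2 j c2 c2'] at hgij
      exact absurd hgij.symm (hdisj _ _)
    · rw [hgy2 i c1, hgy2 j c2] at hgij
      exact hy2y2 i j c1 c1' c2 c2' hgij
  · -- arcs
    intro i hi1
    by_cases b1 : i + 1 < a1
    · rw [hgx1 i (by omega), hgx1 (i + 1) b1]
      have := hxcyc (s₀ + (i : ZMod n))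
      have e : s₀ + (i : ZMod n) + 1 = s₀ + ((i + 1 : ℕ) : ZMod n) := by push_cast; ring
      rwa [e] at this
    · by_cases b2 : i + 1 = a1
      · rw [hgx1 i (by omega), b2, hgy1]
        have e : (i : ZMod n) = ((a1 - 1 : ℕ) : ZMod n) := by congr 1; omega
        rw [e]
        exact harc1
      · by_cases b3 : i = a1
        · have hb1 : a1 < a1 + 1 := by omega
          have hb2 : a1 + 1 < h + 1 := by omega
          rw [b3, hgy1, hgx2 (a1 + 1) hb1 hb2]
          have e : ((a1 + 1 - 1 : ℕ) : ZMod n) = (a1 : ZMod n) := by norm_num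
          rw [e]
          exact harc2
        · by_cases b4 : i + 1 < h + 1
          · rw [hgx2 i (by omega) (by omega), hgx2 (i + 1) (by omega) b4]
            have := hxcyc (s₀ + ((i - 1 : ℕ) : ZMod n))
            have e : s₀ + ((i - 1 : ℕ) : ZMod n) + 1 = s₀ + ((i + 1 - 1 : ℕ) : ZMod n) := by
              have e2 : i + 1 - 1 = (i - 1) + 1 := by omega
              rw [e2]; push_cast; try ring
            rwa [e] at this
          · by_cases b5 : i = h
            · rw [b5, hgx2 h (by omega) (by omega), hgy2 (h + 1) (by omega)]
              have e : ((h + 1 - (h + 1) : ℕ) : ZMod m) = 0 := by norm_num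
              rw [e, add_zero]
              exact harc3
            · rw [hgy2 i (by omega), hgy2 (i + 1) (by omega)]
              have := hycyc (δ + ((i - (h + 1) : ℕ) : ZMod m))
              have e : δ + ((i - (h + 1) : ℕ) : ZMod m) + 1 = δ + ((i + 1 - (h + 1) : ℕ) : ZMod m) := by
                have e2 : i + 1 - (h + 1) = (i - (h + 1)) + 1 := by omega
                rw [e2]; push_cast; try ring
              rwa [e] at this
  · -- last arc
    rw [hg0, hgy2 (t - 1) (by omega)]
    have e : ((t - 1 - (h + 1) : ℕ) : ZMod m) = ((h - 2 : ℕ) : ZMod m) := by congr 1; omega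
    rw [e]
    exact harc4

end KeyEven

section Final
variable {V : Type*} {A : V → V → Prop} {n m : ℕ}
  {x : ZMod n → V} {y : ZMod m → V}

lemma key_all
    (hn : 2 ≤ n) (hm : 2 ≤ m)
    (hxinj : Function.Injective x) (hyinj : Function.Injective y)
    (hxcyc : ∀ i, A (x i) (x (i + 1))) (hycyc : ∀ i, A (y i) (y (i + 1)))
    (hdisj : ∀ s t, x s ≠ y t)
    (hcov : ∀ v : V, (∃ s, x s = v) ∨ (∃ t, y t = v))
    (hone : ∀ s t, Xor' (A (x s) (y t)) (A (y t) (x s)))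
    (hstrong : ∀ u v : V, u ≠ v → Relation.ReflTransGen A u v)
    (hngp : ¬ ∃ (s : ZMod n) (r : ZMod m), A (x s) (y r) ∧ A (y (r - 1)) (x (s + 1)))
    (s₀ : ZMod n) (t : ℕ) (h3 : 3 ≤ t) (hub : t ≤ 2 * min n m) :
    CycleThru A t (x s₀) := by
  obtain ⟨sc, sa, rc, ra, hd1, hd2, ha1, ha2⟩ :=
    exists_descent_ascent hn hm hdisj hcov hone hstrong hngp
  have hmin1 : min n m ≤ n := Nat.min_le_left n m
  have hmin2 : min n m ≤ m := Nat.min_le_right n m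
  rcases Nat.even_or_odd t with ⟨h, hh⟩ | ⟨h, hh⟩
  · exact key_even hn hm hxinj hyinj hxcyc hycyc hdisj hone hd1 hd2 ha1 ha2 hngp s₀ t h
      (by omega) (by omega) (by omega) (by omega)
  · exact key_odd hn hm hxinj hyinj hxcyc hycyc hdisj hone hd1 hd2 hngp s₀ t h
      (by omega) (by omega) (by omega) (by omega)

end Final

/-- In a strong generalized sum of two Hamiltonian digraphs with no good pair,
every vertex lies on a cycle of each length t with 3 ≤ t ≤ 2·min(n,m). -/
theorem stmt4 {V : Type*} (A : V → V → Prop) {n m : ℕ}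
    (hn : 2 ≤ n) (hm : 2 ≤ m)
    (x : ZMod n → V) (y : ZMod m → V)
    (hxinj : Function.Injective x) (hyinj : Function.Injective y)
    (hxcyc : ∀ i, A (x i) (x (i + 1))) (hycyc : ∀ i, A (y i) (y (i + 1)))
    (hdisj : ∀ s t, x s ≠ y t)
    (hcov : ∀ v : V, (∃ s, x s = v) ∨ (∃ t, y t = v))
    (hone : ∀ s t, Xor' (A (x s) (y t)) (A (y t) (x s)))
    (hstrong : ∀ u v : V, u ≠ v → Relation.ReflTransGen A u v)
    (hngp : ¬ ∃ (s : ZMod n) (r : ZMod m), A (x s) (y r) ∧ A (y (r - 1)) (x (s + 1))) :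
    ∀ v : V, ∀ t : ℕ, 3 ≤ t → t ≤ 2 * min n m → CycleThru A t v := by
  intro v t h3 hub
  rcases hcov v with ⟨s, rfl⟩ | ⟨r, rfl⟩
  · exact key_all hn hm hxinj hyinj hxcyc hycyc hdisj hcov hone hstrong hngp s t h3 hub
  · have hngp' : ¬ ∃ (r' : ZMod m) (s' : ZMod n), A (y r') (x s') ∧ A (x (s' - 1)) (y (r' + 1)) := by
      rintro ⟨r', s', h1, h2⟩
      apply hngp
      refine ⟨s' - 1, r' + 1, h2, ?_⟩
      have e1 : r' + 1 - 1 = r' := by ring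
      have e2 : s' - 1 + 1 = s' := by ring
      rw [e1, e2]
      exact h1
    have hone' : ∀ (r' : ZMod m) (s' : ZMod n), Xor' (A (y r') (x s')) (A (x s') (y r')) :=
      fun r' s' => (hone s' r').symm
    exact key_all hm hn hyinj hxinj hycyc hxcyc (fun r' s' => (hdisj s' r').symm)
      (fun v => (hcov v).symm) hone' hstrong hngp' r t h3 (by rw [Nat.min_comm]; exact hub)
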